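/- Let G be a group acting acylindrically by isometries on a simplicial tree T, generated by an arbitrary (possibly infinite) set S. If for every pair of distinct elements sᵢ, sⱼ ∈ S the elements sᵢ, sⱼ, and sᵢsⱼ each act elliptically on T (fix a point), then the action of G on T is elliptic (G fixes a point of T). -/

import Mathlib

/-- An action of a group `G` by simplicial isometries (automorphisms) on a simplicial
tree, i.e. a connected acyclic simple graph, with the natural edge metric. -/
structure TreeAction (G : Type*) [Group G] where
  V : Type
  T : SimpleGraph V
  isTree : T.IsTree
  act : G →* (T ≃g T)

namespace TreeAction

variable {G : Type*} [Group G] (A : TreeAction G)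

/-- The action fixes a point of the tree (the action is elliptic). -/
def FixesPoint : Prop := ∃ x : A.V, ∀ g : G, A.act g x = x

/-- An element is elliptic if it fixes a point of the tree. -/
def Elliptic (g : G) : Prop := ∃ x : A.V, A.act g x = x

/-- The action has bounded orbits. -/
def BoundedOrbits : Prop := ∃ (x : A.V) (B : ℕ), ∀ g : G, A.T.dist x (A.act g x) ≤ B

/-- `(k, C)`-acylindricity: the pointwise stabiliser of any geodesic edge path of length
at least `k` (equivalently, in a tree, the common stabiliser of two points at distance
at least `k`) has at most `C` elements. -/
def KCAcylindrical (k C : ℕ) : Prop :=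
  ∀ x y : A.V, k ≤ A.T.dist x y →
    {g : G | A.act g x = x ∧ A.act g y = y}.Finite ∧
      {g : G | A.act g x = x ∧ A.act g y = y}.ncard ≤ C

/-- An action on a tree is acylindrical if it is `(k, C)`-acylindrical for some `k ≥ 0`,
`C ≥ 1`. -/
def Acylindrical : Prop := ∃ k C : ℕ, 1 ≤ C ∧ A.KCAcylindrical k C

/-- Bowditch's definition of acylindricity for the action on the tree. -/
def BowditchAcylindrical : Prop :=
  ∀ ε : ℕ, ∃ R N : ℕ, ∀ x y : A.V, R ≤ A.T.dist x y →
    {g : G | A.T.dist x (A.act g x) ≤ ε ∧ A.T.dist y (A.act g y) ≤ ε}.Finite ∧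
      {g : G | A.T.dist x (A.act g x) ≤ ε ∧ A.T.dist y (A.act g y) ≤ ε}.ncard ≤ N

end TreeAction

/-- A group is virtually cyclic if it has a cyclic subgroup of finite index. -/
def IsVirtuallyCyclic (G : Type*) [Group G] : Prop :=
  ∃ H : Subgroup G, H.FiniteIndex ∧ IsCyclic H

namespace TreeAction

variable {G : Type*} [Group G] (A : TreeAction G)

/-- The action is non-elementary: unbounded orbits and the group is not virtually
cyclic. -/
def NonElementary : Prop := ¬ A.BoundedOrbits ∧ ¬ IsVirtuallyCyclic G

/-- The action fixes a bi-infinite geodesic line setwise. -/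
def FixesLine : Prop :=
  ∃ ℓ : ℤ → A.V, (∀ m n : ℤ, (A.T.dist (ℓ m) (ℓ n) : ℤ) = |m - n|) ∧
    ∀ g : G, (fun v => A.act g v) '' Set.range ℓ = Set.range ℓ

end TreeAction

/-- A group is acylindrically arboreal if it admits a non-elementary acylindrical
action on a simplicial tree. -/
def AcylindricallyArboreal (G : Type*) [Group G] : Prop :=
  ∃ A : TreeAction G, A.Acylindrical ∧ A.NonElementary

/-- Property (FA⁻): every action on a simplicial tree either fixes a point or fixes a
bi-infinite geodesic setwise. -/
def PropertyFAMinus (G : Type*) [Group G] : Prop :=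
  ∀ A : TreeAction G, A.FixesPoint ∨ A.FixesLine

open SimpleGraph Walk

namespace TreeGeo

variable {V : Type} {T : SimpleGraph V} (hT : T.IsTree)

/-- the unique path between two vertices of a tree -/
noncomputable def geo (x y : V) : T.Walk x y :=
  ((hT.isConnected.exists_path_of_dist x y).choose)

lemma geo_isPath (x y : V) : (geo hT x y).IsPath :=
  (hT.isConnected.exists_path_of_dist x y).choose_spec.1

lemma length_geo (x y : V) : (geo hT x y).length = T.dist x y :=
  (hT.isConnected.exists_path_of_dist x y).choose_spec.2

lemma geo_unique {x y : V} (p : T.Walk x y) (hp : p.IsPath) : p = geo hT x y :=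
  (hT.existsUnique_path x y).unique hp (geo_isPath hT x y)

lemma dist_getVert_le (W : T.Walk x y) (i : ℕ) (hc : T.Connected) :
    T.dist x (W.getVert i) ≤ i := by
  induction W generalizing i with
  | nil =>
    rw [Walk.getVert_of_length_le _ (Nat.zero_le i)]
    simp [SimpleGraph.dist_self]
  | @cons u v w h p ih =>
    cases i with
    | zero => simp
    | succ n =>
      rw [Walk.getVert_cons_succ]
      calc T.dist u (p.getVert n) ≤ T.dist u v + T.dist v (p.getVert n) :=
            hc.dist_triangle
        _ ≤ 1 + n := by
            have h1 : T.dist u v = 1 := SimpleGraph.dist_eq_one_iff_adj.2 h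
            have := ih n
            omega
        _ = n + 1 := by omega

lemma getVert_dist_le (W : T.Walk x y) (i : ℕ) (hc : T.Connected) :
    T.dist (W.getVert i) y ≤ W.length - i := by
  induction W generalizing i with
  | nil =>
    rw [Walk.getVert_of_length_le _ (Nat.zero_le i)]
    simp
  | @cons u v w h p ih =>
    cases i with
    | zero =>
      simpa using T.dist_le (Walk.cons h p)
    | succ n =>
      rw [Walk.getVert_cons_succ]
      simpa using ih n


lemma dist_add_of_mem_geo {x y v : V} (hv : v ∈ (geo hT x y).support) :
    T.dist x v + T.dist v y = T.dist x y := by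
  obtain ⟨i, hi, hile⟩ := Walk.mem_support_iff_exists_getVert.1 hv
  subst hi
  have h1 := dist_getVert_le (geo hT x y) i hT.isConnected
  have h2 := getVert_dist_le (geo hT x y) i hT.isConnected
  have h3 : T.dist x y ≤ T.dist x ((geo hT x y).getVert i) +
      T.dist ((geo hT x y).getVert i) y := hT.isConnected.dist_triangle
  rw [length_geo] at h2 hile
  omega

lemma dist_eq_index {x y v : V} (hv : v ∈ (geo hT x y).support) :
    (geo hT x y).getVert (T.dist x v) = v := by
  obtain ⟨i, hi, hile⟩ := Walk.mem_support_iff_exists_getVert.1 hv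
  have h1 := dist_getVert_le (geo hT x y) i hT.isConnected
  have h2 := getVert_dist_le (geo hT x y) i hT.isConnected
  have h3 : T.dist x y ≤ T.dist x ((geo hT x y).getVert i) +
      T.dist ((geo hT x y).getVert i) y := hT.isConnected.dist_triangle
  rw [length_geo] at h2 hile
  have : T.dist x ((geo hT x y).getVert i) = i := by omega
  rw [← hi, this]

lemma eq_of_mem_geo_of_dist_eq {x y v w : V} (hv : v ∈ (geo hT x y).support)
    (hw : w ∈ (geo hT x y).support) (h : T.dist x v = T.dist x w) : v = w := by
  rw [← dist_eq_index hT hv, ← dist_eq_index hT hw, h]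

lemma eq_of_dist_zero {x y : V} (h : T.dist x y = 0) (hc : T.Connected) : x = y :=
  (hc.dist_eq_zero_iff.1 h)

/-- support of the geodesic reversed -/
lemma mem_geo_symm {x y v : V} (hv : v ∈ (geo hT x y).support) :
    v ∈ (geo hT y x).support := by
  have : (geo hT x y).reverse = geo hT y x :=
    geo_unique hT _ ((geo_isPath hT x y).reverse)
  rw [← this, Walk.support_reverse, List.mem_reverse]
  exact hv

lemma isPath_append {x y z : V} {p : T.Walk x y} {q : T.Walk y z}
    (hp : p.IsPath) (hq : q.IsPath)
    (h : ∀ v, v ∈ p.support → v ∈ q.support → v = y) : (p.append q).IsPath := by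
  rw [Walk.isPath_def, Walk.support_append, List.nodup_append]
  refine ⟨hp.support_nodup, hq.support_nodup.tail, ?_⟩
  intro v hv w hv' hvw
  subst hvw
  have hvq : v ∈ q.support := List.mem_of_mem_tail hv'
  have : v = y := h v hv hvq
  subst this
  have := hq.support_nodup
  rw [q.support_eq_cons] at this
  exact (List.nodup_cons.1 this).1 hv'

/-- the geodesic between points on a geodesic is a subsegment -/
lemma support_geo_subset {x y m : V} (hm : m ∈ (geo hT x y).support) :
    ∀ v ∈ (geo hT m y).support, v ∈ (geo hT x y).support := by
  classical
  intro v hv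
  have hdrop : (geo hT x y).dropUntil m hm = geo hT m y :=
    geo_unique hT _ ((geo_isPath hT x y).dropUntil hm)
  rw [← hdrop] at hv
  exact Walk.support_dropUntil_subset _ hm hv

/-- median: the three geodesics between three points share a common vertex -/
lemma median (a b c : V) : ∃ m, m ∈ (geo hT a b).support ∧ m ∈ (geo hT a c).support ∧
    m ∈ (geo hT b c).support := by
  classical
  set P := geo hT a b with hP
  set Q := geo hT a c with hQ
  set K : Set ℕ := {n | ∃ v, v ∈ P.support ∧ v ∈ Q.support ∧ T.dist a v = n} with hK
  have hKne : K.Nonempty := ⟨T.dist a a, a, P.start_mem_support, Q.start_mem_support, rfl⟩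
  have hKbdd : BddAbove K := by
    refine ⟨T.dist a b, ?_⟩
    rintro n ⟨v, hv, -, rfl⟩
    have := dist_add_of_mem_geo hT (x := a) (y := b) hv
    omega
  obtain ⟨m, hmP, hmQ, hmd⟩ := Nat.sSup_mem hKne hKbdd
  have hmax : ∀ v, v ∈ P.support → v ∈ Q.support → T.dist a v ≤ T.dist a m := by
    intro v h1 h2
    rw [hmd]
    exact le_csSup hKbdd ⟨v, h1, h2, rfl⟩
  -- the concatenation of geodesics b→m and m→c is a path
  have hkey : ∀ v, v ∈ (geo hT b m).support → v ∈ (geo hT m c).support → v = m := by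
    intro v hv1 hv2
    have hv1' : v ∈ (geo hT m b).support := mem_geo_symm hT hv1
    have hvP : v ∈ P.support := support_geo_subset hT hmP v hv1'
    have hvQ : v ∈ Q.support := support_geo_subset hT hmQ v hv2
    have e1 := dist_add_of_mem_geo hT hv1'   -- d(m,v)+d(v,b) = d(m,b)
    have e2 := dist_add_of_mem_geo hT hvP    -- d(a,v)+d(v,b) = d(a,b)
    have e3 := dist_add_of_mem_geo hT hmP    -- d(a,m)+d(m,b) = d(a,b)
    have e4 := hmax v hvP hvQ
    have : T.dist m v = 0 := by omega
    exact (eq_of_dist_zero this hT.isConnected).symm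
  have hW : ((geo hT b m).append (geo hT m c)).IsPath :=
    isPath_append (geo_isPath hT b m) (geo_isPath hT m c) hkey
  have hWgeo : (geo hT b m).append (geo hT m c) = geo hT b c := geo_unique hT _ hW
  refine ⟨m, hmP, hmQ, ?_⟩
  rw [← hWgeo, Walk.mem_support_append_iff]
  exact Or.inl (geo hT b m).end_mem_support


section IsoLemmas

variable (φ : T ≃g T)

lemma map_geo (x y : V) : (geo hT x y).map φ.toHom = geo hT (φ x) (φ y) :=
  geo_unique hT _ (Walk.map_isPath_of_injective φ.toEquiv.injective (geo_isPath hT x y))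

include hT in
lemma dist_map (x y : V) : T.dist (φ x) (φ y) = T.dist x y := by
  rw [← length_geo hT (φ x) (φ y), ← map_geo hT φ, Walk.length_map, length_geo]

lemma support_map_geo (x y : V) :
    (geo hT (φ x) (φ y)).support = (geo hT x y).support.map φ := by
  rw [← map_geo hT φ, Walk.support_map]
  rfl

end IsoLemmas

variable (hTT : T.IsTree)

/-- convex subsets of the tree -/
def IsConv (Y : Set V) : Prop :=
  ∀ x ∈ Y, ∀ y ∈ Y, ∀ v ∈ (geo hTT x y).support, v ∈ Y

lemma IsConv.inter {Y Z : Set V} (hY : IsConv hT Y) (hZ : IsConv hT Z) :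
    IsConv hT (Y ∩ Z) := by
  rintro x ⟨hx1, hx2⟩ y ⟨hy1, hy2⟩ v hv
  exact ⟨hY x hx1 y hy1 v hv, hZ x hx2 y hy2 v hv⟩

include hT in
lemma exists_min_dist {Y : Set V} (hY : Y.Nonempty) (a : V) :
    ∃ p ∈ Y, ∀ y ∈ Y, T.dist a p ≤ T.dist a y := by
  have hne : ((fun y => T.dist a y) '' Y).Nonempty := hY.image _
  obtain ⟨p, hp, hpd⟩ := Nat.sInf_mem hne
  exact ⟨p, hp, fun y hy => le_trans (le_of_eq hpd) (Nat.sInf_le ⟨y, hy, rfl⟩)⟩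

/-- gate property: distances to points of a convex set decompose through the
projection. -/
lemma gate {Y : Set V} (hY : IsConv hT Y) {a p : V} (hp : p ∈ Y)
    (hmin : ∀ y ∈ Y, T.dist a p ≤ T.dist a y) :
    ∀ y ∈ Y, T.dist a y = T.dist a p + T.dist p y := by
  intro y hy
  obtain ⟨m, h1, h2, h3⟩ := median hT a p y
  have hmY : m ∈ Y := hY p hp y hy m h3
  have e1 := dist_add_of_mem_geo hT h1  -- d(a,m)+d(m,p) = d(a,p)
  have e2 := dist_add_of_mem_geo hT h2  -- d(a,m)+d(m,y) = d(a,y)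
  have e3 := dist_add_of_mem_geo hT h3  -- d(p,m)+d(m,y) = d(p,y)
  have e4 := hmin m hmY
  have e5 : T.dist p m = T.dist m p := T.dist_comm
  have e6 : T.dist p y = T.dist p m + T.dist m y := by omega
  omega

lemma helly3 {Y₁ Y₂ Y₃ : Set V} (h1 : IsConv hT Y₁) (h2 : IsConv hT Y₂)
    (h3 : IsConv hT Y₃) (h12 : (Y₁ ∩ Y₂).Nonempty) (h13 : (Y₁ ∩ Y₃).Nonempty)
    (h23 : (Y₂ ∩ Y₃).Nonempty) : (Y₁ ∩ Y₂ ∩ Y₃).Nonempty := by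
  obtain ⟨c, hc1, hc2⟩ := h12
  obtain ⟨b, hb1, hb3⟩ := h13
  obtain ⟨a, ha2, ha3⟩ := h23
  obtain ⟨m, hmab, hmac, hmbc⟩ := median hT a b c
  exact ⟨m, ⟨h1 b hb1 c hc1 m hmbc, h2 a ha2 c hc2 m hmac⟩, h3 a ha3 b hb3 m hmab⟩

lemma helly_list (hV : Nonempty V) :
    ∀ (n : ℕ) (l : List (Set V)), l.length ≤ n → (∀ Y ∈ l, IsConv hT Y) →
      (∀ Y ∈ l, ∀ Z ∈ l, (Y ∩ Z).Nonempty) → ∃ x, ∀ Y ∈ l, x ∈ Y := by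
  intro n
  induction n with
  | zero =>
    intro l hl _ _
    rw [Nat.le_zero, List.length_eq_zero_iff] at hl
    subst hl
    exact ⟨hV.some, by simp⟩
  | succ n ih =>
    intro l hlen hconv hpair
    match l with
    | [] => exact ⟨hV.some, by simp⟩
    | Y :: l =>
    cases l with
    | nil =>
      obtain ⟨x, hx, -⟩ := hpair Y (by simp) Y (by simp)
      exact ⟨x, by simpa using hx⟩
    | cons Z l' =>
      set l := Z :: l'
      have hconv' : ∀ W ∈ l.map (· ∩ Y), IsConv hT W := by
        intro W hW
        obtain ⟨Z', hZ', rfl⟩ := List.mem_map.1 hW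
        exact IsConv.inter hT (hconv Z' (by simp [hZ'])) (hconv Y (by simp))
      have hpair' : ∀ W ∈ l.map (· ∩ Y), ∀ W' ∈ l.map (· ∩ Y), (W ∩ W').Nonempty := by
        intro W hW W' hW'
        obtain ⟨Z₁, hZ₁, rfl⟩ := List.mem_map.1 hW
        obtain ⟨Z₂, hZ₂, rfl⟩ := List.mem_map.1 hW'
        have h := helly3 hT (hconv Z₁ (by simp [hZ₁])) (hconv Z₂ (by simp [hZ₂]))
          (hconv Y (by simp))
          (hpair Z₁ (by simp [hZ₁]) Z₂ (by simp [hZ₂]))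
          (hpair Z₁ (by simp [hZ₁]) Y (by simp))
          (hpair Z₂ (by simp [hZ₂]) Y (by simp))
        obtain ⟨x, ⟨hx1, hx2⟩, hx3⟩ := h
        exact ⟨x, ⟨hx1, hx3⟩, hx2, hx3⟩
      have hlen' : (l.map (· ∩ Y)).length ≤ n := by
        simpa using Nat.le_of_succ_le_succ (by simpa using hlen)
      obtain ⟨x, hx⟩ := ih (l.map (· ∩ Y)) hlen' hconv' hpair'
      have hxY : x ∈ Y := by
        have := hx (Z ∩ Y) (by simp [l])
        exact this.2
      refine ⟨x, ?_⟩
      intro W hW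
      rcases List.mem_cons.1 hW with rfl | hW
      · exact hxY
      · exact (hx (W ∩ Y) (List.mem_map_of_mem hW)).1

end TreeGeo




namespace TreeActionAux

open TreeGeo TreeAction

variable {G : Type*} [Group G] (A : TreeAction G)

lemma act_mul (g h : G) (x : A.V) : A.act (g * h) x = A.act g (A.act h x) := by
  rw [map_mul]; rfl

lemma act_one (x : A.V) : A.act 1 x = x := by
  rw [map_one]; rfl

variable {A}

lemma act_inv_fix {g : G} {x : A.V} (h : A.act g x = x) : A.act g⁻¹ x = x := by
  have : A.act g (A.act g⁻¹ x) = A.act g x := by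
    rw [← act_mul, mul_inv_cancel, act_one, h]
  exact (A.act g).injective (by rw [this, h])

/-- the fixed-point set of a group element -/
def fix (A : TreeAction G) (g : G) : Set A.V := {x | A.act g x = x}

lemma fix_conv (g : G) : IsConv A.isTree (fix A g) := by
  intro x hx y hy v hv
  have hs := support_map_geo A.isTree (A.act g) x y
  rw [hx, hy] at hs
  have hφv : A.act g v ∈ (geo A.isTree x y).support := by
    rw [hs]
    exact List.mem_map_of_mem hv
  have hd : A.T.dist x v = A.T.dist x (A.act g v) := by
    conv_rhs => rw [← hx]
    rw [dist_map A.isTree (A.act g) x v]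
  exact (eq_of_mem_geo_of_dist_eq A.isTree hv hφv hd).symm

/-- midpoint lemma: an elliptic element fixes the midpoint of `[x, gx]`. -/
lemma midpoint_fix {g : G} (hg : A.Elliptic g) (x : A.V) :
    ∃ y, A.act g y = y ∧ 2 * A.T.dist x y = A.T.dist x (A.act g x) ∧
      y ∈ (geo A.isTree x (A.act g x)).support := by
  have hT := A.isTree
  obtain ⟨y, hyfix, hymin⟩ := exists_min_dist A.isTree (Y := fix A g) hg x
  set x' := A.act g x with hx'
  have hsupp : (geo A.isTree y x').support = (geo A.isTree y x).support.map (A.act g) := by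
    have := support_map_geo A.isTree (A.act g) y x
    rw [hyfix] at this
    exact this
  have hkey : ∀ v, v ∈ (geo A.isTree x y).support → v ∈ (geo A.isTree y x').support → v = y := by
    intro v hv1 hv2
    rw [hsupp] at hv2
    obtain ⟨w, hw, hwv⟩ := List.mem_map.1 hv2
    have hw' : w ∈ (geo A.isTree x y).support := mem_geo_symm A.isTree hw
    have e1 := dist_add_of_mem_geo A.isTree hv1
    have e2 := dist_add_of_mem_geo A.isTree hw'
    have e3 : A.T.dist v y = A.T.dist w y := by
      rw [← hwv]
      have : A.T.dist (A.act g w) (A.act g y) = A.T.dist w y :=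
        dist_map A.isTree (A.act g) w y
      rw [← this, hyfix]
    have e4 : A.T.dist x v = A.T.dist x w := by omega
    have hvw : v = w := eq_of_mem_geo_of_dist_eq A.isTree hv1 hw' e4
    have hvfix : A.act g v = v := by rw [← hvw] at hwv; exact hwv
    have e5 := hymin v hvfix
    have : A.T.dist v y = 0 := by omega
    exact eq_of_dist_zero this A.isTree.isConnected
  have hW : ((geo A.isTree x y).append (geo A.isTree y x')).IsPath :=
    isPath_append (geo_isPath A.isTree x y) (geo_isPath A.isTree y x') hkey
  have hWgeo : (geo A.isTree x y).append (geo A.isTree y x') = geo A.isTree x x' :=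
    geo_unique A.isTree _ hW
  have hlen : A.T.dist x y + A.T.dist y x' = A.T.dist x x' := by
    rw [← length_geo A.isTree x y, ← length_geo A.isTree y x', ← length_geo A.isTree x x',
      ← hWgeo, Walk.length_append]
  have hyx' : A.T.dist y x' = A.T.dist x y := by
    have : A.T.dist (A.act g y) (A.act g x) = A.T.dist y x := dist_map A.isTree (A.act g) y x
    rw [hyfix] at this
    rw [← hx'] at this
    rw [this, SimpleGraph.dist_comm]
  refine ⟨y, hyfix, by omega, ?_⟩
  rw [← hWgeo, Walk.mem_support_append_iff]
  exact Or.inl (geo A.isTree x y).end_mem_support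

/-- two elliptic elements with elliptic product have a common fixed point -/
lemma pair_fix {s t : G} (hs : A.Elliptic s) (ht : A.Elliptic t)
    (hst : A.Elliptic (s * t)) : ∃ x, A.act s x = x ∧ A.act t x = x := by
  obtain ⟨x, hx⟩ := hst
  rw [act_mul] at hx
  have hsinv : A.act s⁻¹ x = A.act t x := by
    refine (A.act s).injective ?_
    rw [← act_mul, mul_inv_cancel, act_one, hx]
  have hsinv_ell : A.Elliptic s⁻¹ := by
    obtain ⟨z, hz⟩ := hs
    exact ⟨z, act_inv_fix hz⟩
  obtain ⟨y₁, hy₁fix, hy₁d, hy₁mem⟩ := midpoint_fix ht x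
  obtain ⟨y₂, hy₂fix, hy₂d, hy₂mem⟩ := midpoint_fix hsinv_ell x
  rw [hsinv] at hy₂d hy₂mem
  have : A.T.dist x y₁ = A.T.dist x y₂ := by omega
  have hyy : y₁ = y₂ := eq_of_mem_geo_of_dist_eq A.isTree hy₁mem hy₂mem this
  subst hyy
  refine ⟨y₁, ?_, hy₁fix⟩
  have := act_inv_fix hy₂fix
  rwa [inv_inv] at this

/-- common fixed point for a finite family with pairwise common fixed points -/
lemma finset_fix (F : Finset G)
    (hpairs : ∀ g ∈ F, ∀ h ∈ F, ∃ x, A.act g x = x ∧ A.act h x = x) :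
    ∃ x, ∀ g ∈ F, A.act g x = x := by
  classical
  have hV : Nonempty A.V := A.isTree.isConnected.nonempty
  have h := helly_list A.isTree hV (F.toList.map (fix A)).length (F.toList.map (fix A))
    le_rfl ?_ ?_
  · obtain ⟨x, hx⟩ := h
    refine ⟨x, fun g hg => ?_⟩
    exact hx (fix A g) (List.mem_map_of_mem (Finset.mem_toList.2 hg))
  · intro Y hY
    obtain ⟨g, -, rfl⟩ := List.mem_map.1 hY
    exact fix_conv g
  · intro Y hY Z hZ
    obtain ⟨g, hg, rfl⟩ := List.mem_map.1 hY
    obtain ⟨h, hh, rfl⟩ := List.mem_map.1 hZ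
    obtain ⟨x, hx1, hx2⟩ := hpairs g (Finset.mem_toList.1 hg) h (Finset.mem_toList.1 hh)
    exact ⟨x, hx1, hx2⟩

end TreeActionAux


namespace TreeActionAux

open TreeGeo TreeAction

variable {G : Type*} [Group G] {A : TreeAction G}

/-- stabiliser subgroup of a point -/
def stab (A : TreeAction G) (p : A.V) : Subgroup G where
  carrier := {g | A.act g p = p}
  one_mem' := act_one A p
  mul_mem' := by
    intro a b ha hb
    simp only [Set.mem_setOf_eq] at *
    rw [act_mul, hb, ha]
  inv_mem' := fun h => act_inv_fix h

lemma exists_finset_closure {S : Set G} {g : G} (hg : g ∈ Subgroup.closure S) :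
    ∃ F : Finset G, ↑F ⊆ S ∧ g ∈ Subgroup.closure (F : Set G) := by
  classical
  induction hg using Subgroup.closure_induction with
  | mem x hx => exact ⟨{x}, by simpa using hx, Subgroup.subset_closure (by simp)⟩
  | one => exact ⟨∅, by simp, one_mem _⟩
  | mul x y hx hy ihx ihy =>
    obtain ⟨F₁, hF₁, hx'⟩ := ihx
    obtain ⟨F₂, hF₂, hy'⟩ := ihy
    refine ⟨F₁ ∪ F₂, ?_, ?_⟩
    · intro z hz
      rcases Finset.mem_union.1 (by exact_mod_cast hz) with h | h
      · exact hF₁ h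
      · exact hF₂ h
    · refine mul_mem ?_ ?_
      · refine Subgroup.closure_mono ?_ hx'
        intro a ha
        simp only [Finset.coe_union, Set.mem_union]
        exact Or.inl ha
      · refine Subgroup.closure_mono ?_ hy'
        intro a ha
        simp only [Finset.coe_union, Set.mem_union]
        exact Or.inr ha
  | inv x hx ih =>
    obtain ⟨F, hF, hx'⟩ := ih
    exact ⟨F, hF, inv_mem hx'⟩

end TreeActionAux



/-- If a group `G` acts acylindrically on a simplicial tree and is generated by an
arbitrary (possibly infinite) set `S` such that every `s ∈ S`, every `t ∈ S` and every
product `s * t` of distinct elements of `S` acts elliptically, then the action of `G`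
is elliptic, i.e. `G` fixes a point of the tree. -/
theorem elliptic_generators_acylindrical {G : Type*} [Group G] (A : TreeAction G)
    (hacyl : A.Acylindrical) (S : Set G)
    (hgen : Subgroup.closure S = ⊤)
    (hell : ∀ s ∈ S, A.Elliptic s)
    (hprod : ∀ s ∈ S, ∀ t ∈ S, s ≠ t → A.Elliptic (s * t)) :
    A.FixesPoint := by
  classical
  open TreeGeo TreeActionAux in
  obtain ⟨k, C, hC, hkc⟩ := hacyl
  have hT := A.isTree
  have hV : Nonempty A.V := A.isTree.isConnected.nonempty
  -- every element of the group is elliptic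
  have hellall : ∀ g : G, A.Elliptic g := by
    intro g
    have hg : g ∈ Subgroup.closure S := by rw [hgen]; trivial
    obtain ⟨F, hFS, hgF⟩ := exists_finset_closure hg
    have hpairs : ∀ a ∈ F, ∀ b ∈ F, ∃ x, A.act a x = x ∧ A.act b x = x := by
      intro a ha b hb
      by_cases hab : a = b
      · subst hab
        obtain ⟨x, hx⟩ := hell a (hFS ha)
        exact ⟨x, hx, hx⟩
      · exact pair_fix (hell a (hFS ha)) (hell b (hFS hb)) (hprod a (hFS ha) b (hFS hb) hab)
    obtain ⟨p, hp⟩ := finset_fix F hpairs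
    have hle : Subgroup.closure (F : Set G) ≤ stab A p :=
      (Subgroup.closure_le _).2 (fun a ha => hp a (by exact_mod_cast ha))
    exact ⟨p, hle hgF⟩
  -- every finite subset of the group has a common fixed point
  have hfinfix : ∀ F : Finset G, ∃ x, ∀ g ∈ F, A.act g x = x := by
    intro F
    refine finset_fix F ?_
    intro a _ b _
    exact pair_fix (hellall a) (hellall b) (hellall (a * b))
  -- the fixed set of a finite subset, its convexity and projections
  set Y : Finset G → Set A.V := fun F => {x | ∀ g ∈ F, A.act g x = x} with hY
  have hYne : ∀ F, (Y F).Nonempty := fun F => hfinfix F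
  have hYconv : ∀ F, IsConv A.isTree (Y F) := by
    intro F x hx y hy' v hv
    intro g hg
    exact TreeActionAux.fix_conv g x (hx g hg) y (hy' g hg) v hv
  have hYmono : ∀ {F F' : Finset G}, F ⊆ F' → Y F' ⊆ Y F := by
    intro F F' hFF x hx g hg
    exact hx g (hFF hg)
  obtain ⟨x₀⟩ := hV
  have hproj : ∀ F : Finset G, ∃ p ∈ Y F, ∀ y ∈ Y F, A.T.dist x₀ p ≤ A.T.dist x₀ y :=
    fun F => exists_min_dist A.isTree (hYne F) x₀
  choose p hpY hpmin using hproj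
  by_cases hbdd : BddAbove (Set.range fun F => A.T.dist x₀ (p F))
  · -- bounded case : the furthest projection is a global fixed point
    have hne : (Set.range fun F => A.T.dist x₀ (p F)).Nonempty := ⟨_, ⟨∅, rfl⟩⟩
    obtain ⟨F₀, hF₀⟩ := Nat.sSup_mem hne hbdd
    have hF₀' : A.T.dist x₀ (p F₀) = sSup (Set.range fun F => A.T.dist x₀ (p F)) := hF₀
    refine ⟨p F₀, fun g => ?_⟩
    set F' : Finset G := insert g F₀
    have hsub : Y F' ⊆ Y F₀ := hYmono (Finset.subset_insert g F₀)
    have hgate := gate A.isTree (hYconv F₀) (hpY F₀) (hpmin F₀) (p F') (hsub (hpY F'))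
    have hle : A.T.dist x₀ (p F') ≤ A.T.dist x₀ (p F₀) := by
      rw [hF₀']
      exact le_csSup hbdd ⟨F', rfl⟩
    have : A.T.dist (p F₀) (p F') = 0 := by omega
    have heq : p F₀ = p F' := eq_of_dist_zero this A.isTree.isConnected
    have := hpY F'
    rw [← heq] at this
    exact this g (Finset.mem_insert_self g F₀)
  · -- unbounded case : the group is finite
    rw [not_bddAbove_iff] at hbdd
    have hcard : ∀ F : Finset G, F.card ≤ C := by
      intro F
      obtain ⟨n, ⟨F₁, hF₁'⟩, hn⟩ := hbdd (A.T.dist x₀ (p F) + k)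
      have hF₁ : A.T.dist x₀ (p F₁) = n := hF₁'
      set F₂ : Finset G := F ∪ F₁
      have hy2 : p F₂ ∈ Y F := hYmono Finset.subset_union_left (hpY F₂)
      have hy1 : A.T.dist x₀ (p F₁) ≤ A.T.dist x₀ (p F₂) :=
        hpmin F₁ (p F₂) (hYmono Finset.subset_union_right (hpY F₂))
      have hgate := gate A.isTree (hYconv F) (hpY F) (hpmin F) (p F₂) hy2
      have hdist : k ≤ A.T.dist (p F) (p F₂) := by
        rw [← hF₁] at hn
        omega
      obtain ⟨hfin, hcard⟩ := hkc (p F) (p F₂) hdist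
      have hsubset : (F : Set G) ⊆ {g : G | A.act g (p F) = p F ∧ A.act g (p F₂) = p F₂} := by
        intro g hg
        exact ⟨hpY F g (by exact_mod_cast hg), hy2 g (by exact_mod_cast hg)⟩
      calc F.card = (F : Set G).ncard := (Set.ncard_coe_finset F).symm
        _ ≤ _ := Set.ncard_le_ncard hsubset hfin
        _ ≤ C := hcard
    have hfin : (Set.univ : Set G).Finite := by
      by_contra hinf
      rw [← Set.not_infinite, not_not] at hinf
      obtain ⟨F, -, hFcard⟩ := hinf.exists_subset_card_eq (C + 1)
      have := hcard F
      omega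
    obtain ⟨x, hx⟩ := hfinfix hfin.toFinset
    exact ⟨x, fun g => hx g (by simp)⟩
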